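/- Let R be a commutative ring, I₁, I₂ ideals, x a non-zerodivisor on I₂² with I₂ ⊆ I₁ (i.e., I₂² : (x) = I₂²), and let I = xI₁ + I₂. Then there is a short exact sequence of R-modules 0 → xI₂² → (x²I₁² + xI₁I₂) ⊕ I₂² → I² → 0, where the first map sends a to (a, −a) and the second sends (b, c) to b + c. -/

import Mathlib

/-- Let `R` be a commutative ring, `I₁, I₂` ideals with `I₂ ⊆ I₁`, `x ∈ R` a
non-zerodivisor modulo `I₂²` (i.e. `I₂² : (x) = I₂²`), and `I = xI₁ + I₂`.  Then there is a
short exact sequence of `R`-modules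
`0 → xI₂² → (x²I₁² + xI₁I₂) ⊕ I₂² → I² → 0`,
where the first map sends `a` to `(a, −a)` and the second sends `(b, c)` to `b + c`. -/
theorem rees_short_exact_sequence {R : Type*} [CommRing R] (x : R) (I₁ I₂ : Ideal R)
    (h : I₂ ≤ I₁) (hx : (I₂ ^ 2).colon (Ideal.span {x}) = I₂ ^ 2) :
    let A : Ideal R := Ideal.span {x ^ 2} * I₁ ^ 2 + Ideal.span {x} * I₁ * I₂
    let B : Ideal R := I₂ ^ 2
    let M : Ideal R := Ideal.span {x} * I₂ ^ 2
    let f : M →ₗ[R] A × B :=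
      LinearMap.prod
        (Submodule.inclusion (by
          refine le_trans ?_ le_sup_right
          show Ideal.span {x} * I₂ ^ 2 ≤ Ideal.span {x} * I₁ * I₂
          rw [pow_two, ← mul_assoc]
          exact Ideal.mul_mono (Ideal.mul_mono le_rfl h) le_rfl))
        (-(Submodule.inclusion Ideal.mul_le_right))
    let g : A × B →ₗ[R] R := A.subtype.coprod B.subtype
    Function.Injective f ∧ Function.Exact f g ∧
      LinearMap.range g = ((Ideal.span {x} * I₁ + I₂) ^ 2 : Ideal R) := by
  intro A B M f g
  -- A as span{x} * J
  have hA : A = Ideal.span {x} * (Ideal.span {x} * I₁ ^ 2 + I₁ * I₂) := by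
    show Ideal.span {x ^ 2} * I₁ ^ 2 + Ideal.span {x} * I₁ * I₂ = _
    rw [mul_add, pow_two x, ← Ideal.span_singleton_mul_span_singleton, mul_assoc, mul_assoc]
  refine ⟨?_, ?_, ?_⟩
  · -- injectivity
    intro m₁ m₂ hm
    have : (m₁ : R) = (m₂ : R) := congrArg (fun z => ((z.1 : A) : R)) hm
    exact Subtype.ext this
  · -- exactness
    intro y
    constructor
    · intro hy
      have hsum : (y.1 : R) + (y.2 : R) = 0 := hy
      have hy2 : (y.1 : R) ∈ B := by
        have h2 : (y.1 : R) = -(y.2 : R) := eq_neg_of_add_eq_zero_left hsum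
        rw [h2]; exact neg_mem y.2.2
      -- y.1 ∈ A, write as x * t
      have hy1 : (y.1 : R) ∈ Ideal.span {x} * (Ideal.span {x} * I₁ ^ 2 + I₁ * I₂) := by
        rw [← hA]; exact y.1.2
    -- extract t
      rw [Ideal.mem_span_singleton_mul] at hy1
      obtain ⟨t, ht, hxt⟩ := hy1
      have htB : t ∈ (I₂ ^ 2 : Ideal R) := by
        rw [← hx, Ideal.mem_colon_span_singleton, mul_comm, hxt]; exact hy2
      have hyM : (y.1 : R) ∈ M := by
        rw [Ideal.mem_span_singleton_mul]
        exact ⟨t, htB, hxt⟩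
      refine ⟨⟨(y.1 : R), hyM⟩, ?_⟩
      apply Prod.ext
      · exact Subtype.ext rfl
      · apply Subtype.ext
        show -((y.1 : R)) = (y.2 : R)
        rw [eq_comm, eq_neg_iff_add_eq_zero, add_comm]
        exact hsum
    · rintro ⟨m, rfl⟩
      show (f m).1.1 + (f m).2.1 = 0
      show (m : R) + (-(m : R)) = 0
      ring
  · -- range
    have hrg : LinearMap.range g = A ⊔ B := by
      rw [show g = A.subtype.coprod B.subtype from rfl, LinearMap.range_coprod,
        Submodule.range_subtype, Submodule.range_subtype]
    rw [hrg]
    show A + B = _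
    show Ideal.span {x ^ 2} * I₁ ^ 2 + Ideal.span {x} * I₁ * I₂ + I₂ ^ 2 = _
    have : (Ideal.span {x} * I₁ + I₂) ^ 2
        = Ideal.span {x} * I₁ * (Ideal.span {x} * I₁) + Ideal.span {x} * I₁ * I₂
          + (Ideal.span {x} * I₁ * I₂ + I₂ * I₂) := by
      rw [pow_two, add_mul, mul_add, mul_add, mul_comm I₂ (Ideal.span {x} * I₁), add_assoc]
    rw [this, show Ideal.span {x} * I₁ * (Ideal.span {x} * I₁) = Ideal.span {x ^ 2} * I₁ ^ 2 by
      rw [mul_mul_mul_comm, Ideal.span_singleton_mul_span_singleton, ← pow_two, ← pow_two],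
      ← pow_two I₂]
    simp only [Ideal.add_eq_sup, sup_assoc, sup_left_idem]
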